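/- Let p be an odd prime, m ≥ 1, and b = (b_1,…,b_m) ∈ F_p^m with disc_{F_p}(b) > 1/p². Then there exists ℓ ∈ F_p with ℓ ≠ 0 such that Σ_{j=1}^{m} ||(ℓb_j)^/p||²_{ℝ/ℤ} ≤ 2·log p. -/

import Mathlib

open Finset Matrix

noncomputable section

/-- The sign `±1` associated to a Boolean. -/
def signb (R : Type*) [Ring R] (b : Bool) : R := if b then 1 else -1

open Classical in
/-- Uniform/counting probability of an event on a finite sample space. -/
def prob {Ω : Type*} [Fintype Ω] (E : Ω → Prop) : ℝ :=
  ((Finset.univ.filter E).card : ℝ) / (Fintype.card Ω : ℝ)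

/-- The symmetric random sign matrix determined by the Boolean data `ω`
(only the entries `ω i j` with `i ≤ j` are used); it is uniformly distributed
over symmetric `±1` matrices when `ω` is uniform. -/
def symMat (R : Type*) [Ring R] {n : ℕ} (ω : Fin n → Fin n → Bool) :
    Matrix (Fin n) (Fin n) R :=
  Matrix.of fun i j => signb R (ω (min i j) (max i j))

/-- Atom probability of a vector over `ZMod p` w.r.t. i.i.d. Rademacher signs. -/
def rho (p : ℕ) {ι : Type*} [Fintype ι] [DecidableEq ι] (w : ι → ZMod p) : ℝ :=
  ⨆ r : ZMod p, prob (fun ξ : ι → Bool => ∑ i, signb (ZMod p) (ξ i) * w i = r)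

/-- Discrepancy of a vector over `ZMod p` w.r.t. i.i.d. Rademacher signs. -/
def disc (p : ℕ) {ι : Type*} [Fintype ι] [DecidableEq ι] (w : ι → ZMod p) : ℝ :=
  ⨆ x : ZMod p,
    |prob (fun ξ : ι → Bool => ∑ i, signb (ZMod p) (ξ i) * w i = x) - 1 / (p : ℝ)|

/-- Distance from a real number to the nearest integer (the `ℝ/ℤ` norm). -/
def distRZ (x : ℝ) : ℝ := |x - round x|

lemma prob_eq {Ω : Type*} [Fintype Ω] (E : Ω → Prop) [DecidablePred E] :
    prob E = ((Finset.univ.filter E).card : ℝ) / (Fintype.card Ω : ℝ) := by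
  unfold prob
  rw [Finset.filter_congr_decidable]

lemma distRZ_add_int (x : ℝ) (k : ℤ) : distRZ (x + k) = distRZ x := by
  unfold distRZ
  rw [round_add_intCast]
  congr 1
  push_cast
  ring

open Real in
lemma abs_cos_pi_le (y : ℝ) : |Real.cos (π * y)| ≤ Real.exp (-(2 * distRZ y ^ 2)) := by
  have hπ : (0:ℝ) < π := Real.pi_pos
  set z : ℝ := y - round y with hz
  have hz2 : |z| ≤ 1 / 2 := abs_sub_round y
  have hdef : distRZ y = |z| := rfl
  have h1 : |Real.cos (π * y)| = |Real.cos (π * z)| := by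
    have hy : π * y = π * z + (round y : ℤ) * π := by rw [hz]; push_cast; ring
    rw [hy, Real.cos_add_int_mul_pi, abs_mul]
    rcases Int.even_or_odd (round y) with he | ho
    · rw [he.neg_one_zpow]; simp
    · rw [ho.neg_one_zpow]; simp
  set t : ℝ := |z| with ht
  have ht0 : 0 ≤ t := abs_nonneg z
  have ht2 : t ≤ 1/2 := hz2
  have h2 : Real.cos (π * z) = Real.cos (π * t) := by
    rw [ht, ← Real.cos_abs (π * z), abs_mul, abs_of_pos hπ]
  have hsin : t ≤ Real.sin (π * t / 2) := by
    have h := Real.mul_le_sin (x := π * t / 2) (by positivity) (by nlinarith)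
    have he : 2 / π * (π * t / 2) = t := by field_simp
    linarith [he ▸ h]
  have hcos2 : Real.cos (π * t) = 1 - 2 * Real.sin (π * t / 2) ^ 2 := by
    have h := Real.cos_two_mul (π * t / 2)
    have h2 : Real.cos (π*t/2)^2 = 1 - Real.sin (π*t/2)^2 := Real.cos_sq' (π*t/2)
    rw [show π * t = 2 * (π * t / 2) by ring, h, h2]
    ring
  have hle : Real.cos (π * t) ≤ 1 - 2 * t^2 := by nlinarith [hsin, ht0]
  have hexp : 1 - 2 * t^2 ≤ Real.exp (-(2 * t^2)) := by
    have := Real.add_one_le_exp (-(2 * t ^ 2)); linarith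
  have hnn : 0 ≤ Real.cos (π * z) := by
    apply Real.cos_nonneg_of_mem_Icc
    constructor
    · rcases abs_le.1 hz2 with ⟨hl, _⟩; nlinarith
    · rcases abs_le.1 hz2 with ⟨_, hr⟩; nlinarith
  calc |Real.cos (π*y)| = Real.cos (π * z) := by rw [h1, abs_of_nonneg hnn]
    _ = Real.cos (π * t) := h2
    _ ≤ 1 - 2*t^2 := hle
    _ ≤ Real.exp (-(2 * t^2)) := hexp
    _ = Real.exp (-(2 * distRZ y ^2)) := by rw [hdef]

lemma char_map_sum {ι A M : Type*} [AddCommMonoid A] [CommMonoid M]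
    (ψ : AddChar A M) (s : Finset ι) (f : ι → A) :
    ψ (∑ i ∈ s, f i) = ∏ i ∈ s, ψ (f i) := by
  classical
  induction s using Finset.cons_induction with
  | empty => simp
  | cons a s ha ih => rw [Finset.sum_cons, Finset.prod_cons, AddChar.map_add_eq_mul, ih]

lemma sum_char (p : ℕ) [NeZero p] (a : ZMod p) :
    ∑ l : ZMod p, ZMod.stdAddChar (l * a) = if a = 0 then (p:ℂ) else 0 := by
  split_ifs with h
  · subst h
    simp [ZMod.card]
  · have h1 := ZMod.isPrimitive_stdAddChar p h
    have hne : AddChar.mulShift (ZMod.stdAddChar (N := p)) a ≠ 0 := h1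
    have h0 := AddChar.sum_eq_zero_iff_ne_zero.mpr hne
    calc ∑ l : ZMod p, ZMod.stdAddChar (l * a)
        = ∑ l : ZMod p, AddChar.mulShift (ZMod.stdAddChar (N := p)) a l := by
          simp [AddChar.mulShift_apply, mul_comm]
      _ = 0 := h0

lemma auxA (p : ℕ) [NeZero p] (m : ℕ) (b : Fin m → ZMod p) (l : ZMod p) :
    ∑ ξ : Fin m → Bool, ZMod.stdAddChar (l * ∑ i, signb (ZMod p) (ξ i) * b i)
      = (2:ℂ)^m * ∏ j, ((Real.cos (2 * Real.pi * ((l * b j).val : ℝ) / p) : ℝ) : ℂ) := by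
  have hψval : ∀ a : ZMod p, ZMod.stdAddChar a
      = Complex.exp (((2 * Real.pi * (a.val : ℝ) / p : ℝ) : ℂ) * Complex.I) := by
    intro a
    rw [ZMod.stdAddChar_apply, ZMod.toCircle_apply]
    congr 1
    push_cast
    ring
  have hψpair : ∀ a : ZMod p, ZMod.stdAddChar a + ZMod.stdAddChar (-a)
      = 2 * ((Real.cos (2 * Real.pi * (a.val:ℝ) / p) : ℝ) : ℂ) := by
    intro a
    rw [AddChar.map_neg_eq_inv, hψval a, ← Complex.exp_neg, Complex.ofReal_cos,
      Complex.two_cos, neg_mul]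
  calc ∑ ξ : Fin m → Bool, ZMod.stdAddChar (l * ∑ i, signb (ZMod p) (ξ i) * b i)
      = ∑ ξ : Fin m → Bool, ∏ j, ZMod.stdAddChar (signb (ZMod p) (ξ j) * (l * b j)) := by
        refine Finset.sum_congr rfl fun ξ _ => ?_
        rw [Finset.mul_sum, char_map_sum]
        refine Finset.prod_congr rfl fun j _ => ?_
        congr 1
        ring
    _ = ∏ j, ∑ s : Bool, ZMod.stdAddChar (signb (ZMod p) s * (l * b j)) := by
        rw [Finset.prod_univ_sum, Fintype.piFinset_univ]
    _ = ∏ j, (ZMod.stdAddChar (l * b j) + ZMod.stdAddChar (-(l * b j))) := by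
        refine Finset.prod_congr rfl fun j _ => ?_
        rw [Fintype.sum_bool]
        simp [signb]
    _ = ∏ j, (2 * ((Real.cos (2 * Real.pi * ((l * b j).val:ℝ) / p) : ℝ) : ℂ)) :=
        Finset.prod_congr rfl fun j _ => hψpair _
    _ = 2^m * ∏ j, ((Real.cos (2 * Real.pi * ((l * b j).val : ℝ) / p) : ℝ) : ℂ) := by
        rw [Finset.prod_mul_distrib, Finset.prod_const, Finset.card_univ, Fintype.card_fin]

lemma auxCount (p : ℕ) [NeZero p] (m : ℕ) (b : Fin m → ZMod p) (x : ZMod p) :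
    (p : ℂ) * (((Finset.univ.filter fun ξ : Fin m → Bool =>
        ∑ i, signb (ZMod p) (ξ i) * b i = x).card : ℕ) : ℂ)
      = ∑ l : ZMod p, (∑ ξ : Fin m → Bool,
          ZMod.stdAddChar (l * ∑ i, signb (ZMod p) (ξ i) * b i)) * ZMod.stdAddChar (-(l * x)) := by
  have h1 : ∀ l : ZMod p, (∑ ξ : Fin m → Bool,
        ZMod.stdAddChar (l * ∑ i, signb (ZMod p) (ξ i) * b i)) * ZMod.stdAddChar (-(l * x))
      = ∑ ξ : Fin m → Bool, ZMod.stdAddChar (l * ((∑ i, signb (ZMod p) (ξ i) * b i) - x)) := by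
    intro l
    rw [Finset.sum_mul]
    refine Finset.sum_congr rfl fun ξ _ => ?_
    rw [← AddChar.map_add_eq_mul]
    congr 1
    ring
  rw [Finset.sum_congr rfl fun l _ => h1 l, Finset.sum_comm]
  have h2 : ∀ ξ : Fin m → Bool, ∑ l : ZMod p,
      ZMod.stdAddChar (l * ((∑ i, signb (ZMod p) (ξ i) * b i) - x))
      = if (∑ i, signb (ZMod p) (ξ i) * b i) = x then (p:ℂ) else 0 := by
    intro ξ
    rw [sum_char]
    simp [sub_eq_zero]
  rw [Finset.sum_congr rfl fun ξ _ => h2 ξ, ← Finset.sum_filter, Finset.sum_const,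
    nsmul_eq_mul, mul_comm]


/-- If `b ∈ F_p^m` has discrepancy greater than `1/p²`, then there is a nonzero
frequency `ℓ` with `∑_j ‖ℓ b_j / p‖²_{ℝ/ℤ} ≤ 2 log p`. -/
theorem structured_frequency_of_large_disc (p : ℕ) [Fact p.Prime] (hodd : Odd p)
    (m : ℕ) (hm : 1 ≤ m) (b : Fin m → ZMod p)
    (hb : 1 / (p : ℝ) ^ 2 < disc p b) :
    ∃ l : ZMod p, l ≠ 0 ∧
      ∑ j, distRZ (((l * b j).val : ℝ) / p) ^ 2 ≤ 2 * Real.log p := by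
  classical
  by_contra hcon
  push_neg at hcon
  have hp : p.Prime := Fact.out
  haveI : NeZero p := ⟨hp.ne_zero⟩
  have hp2 : p ≠ 2 := by rintro rfl; revert hodd; decide
  have hp3 : 3 ≤ p := by have := hp.two_le; omega
  have hpR : (3:ℝ) ≤ (p:ℝ) := by exact_mod_cast hp3
  have hp0 : (0:ℝ) < p := by linarith
  have hp0' : (p:ℝ) ≠ 0 := ne_of_gt hp0
  have hkey : ∀ x : ZMod p,
      |prob (fun ξ : Fin m → Bool => ∑ i, signb (ZMod p) (ξ i) * b i = x) - 1 / (p:ℝ)|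
        ≤ ((p:ℝ) - 1) / (p:ℝ)^5 := by
    intro x
    set C : ℝ := (((Finset.univ.filter fun ξ : Fin m → Bool =>
        ∑ i, signb (ZMod p) (ξ i) * b i = x).card : ℕ) : ℝ) with hC
    have hprob : prob (fun ξ : Fin m → Bool => ∑ i, signb (ZMod p) (ξ i) * b i = x)
        = C / 2^m := by
      rw [prob_eq, ← hC]
      norm_num [Fintype.card_fun]
    have hccast : (((Finset.univ.filter fun ξ : Fin m → Bool =>
        ∑ i, signb (ZMod p) (ξ i) * b i = x).card : ℕ) : ℂ) = ((C:ℝ) : ℂ) := by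
      rw [hC]; norm_cast
    have hct2 : (p:ℂ) * ((C:ℝ) : ℂ)
        = ∑ l : ZMod p, ((2:ℂ)^m * ∏ j, ((Real.cos (2 * Real.pi * ((l * b j).val : ℝ) / p) : ℝ) : ℂ))
            * ZMod.stdAddChar (-(l * x)) := by
      calc (p:ℂ) * ((C:ℝ) : ℂ)
          = (p:ℂ) * (((Finset.univ.filter fun ξ : Fin m → Bool =>
              ∑ i, signb (ZMod p) (ξ i) * b i = x).card : ℕ) : ℂ) := by rw [hccast]
        _ = ∑ l : ZMod p, (∑ ξ : Fin m → Bool,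
              ZMod.stdAddChar (l * ∑ i, signb (ZMod p) (ξ i) * b i))
                * ZMod.stdAddChar (-(l * x)) := auxCount p m b x
        _ = _ := Finset.sum_congr rfl fun l _ => by rw [auxA p m b l]
    have hsplit : (p:ℂ) * ((C:ℝ) : ℂ) - 2^m
        = ∑ l ∈ Finset.univ.erase (0 : ZMod p),
            ((2:ℂ)^m * ∏ j, ((Real.cos (2 * Real.pi * ((l * b j).val : ℝ) / p) : ℝ) : ℂ))
              * ZMod.stdAddChar (-(l * x)) := by
      have h0 : ((2:ℂ)^m * ∏ j, ((Real.cos (2 * Real.pi * (((0:ZMod p) * b j).val : ℝ) / p) : ℝ) : ℂ))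
          * ZMod.stdAddChar (-((0:ZMod p) * x)) = 2^m := by
        simp
      have hadd := Finset.add_sum_erase Finset.univ
        (fun l : ZMod p => ((2:ℂ)^m * ∏ j, ((Real.cos (2 * Real.pi * ((l * b j).val : ℝ) / p) : ℝ) : ℂ))
            * ZMod.stdAddChar (-(l * x))) (Finset.mem_univ (0:ZMod p))
      rw [hct2, ← hadd]
      beta_reduce
      rw [h0]
      ring
    have habs1 : |(p:ℝ) * C - 2^m|
        ≤ ∑ l ∈ Finset.univ.erase (0:ZMod p),
            (2:ℝ)^m * ∏ j, |Real.cos (2 * Real.pi * ((l * b j).val:ℝ)/(p:ℝ))| := by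
      have h1 : |((p:ℝ) * C - 2^m)| = ‖(p:ℂ) * ((C:ℝ):ℂ) - 2^m‖ := by
        rw [show (p:ℂ) * ((C:ℝ):ℂ) - 2^m = (((p:ℝ) * C - 2^m : ℝ) : ℂ) by push_cast; ring,
          Complex.norm_real, Real.norm_eq_abs]
      rw [h1, hsplit]
      refine le_trans (norm_sum_le _ _) (Finset.sum_le_sum fun l _ => ?_)
      rw [norm_mul]
      have hψ1 : ‖(ZMod.stdAddChar (-(l * x)) : ℂ)‖ = 1 := by
        rw [ZMod.stdAddChar_apply, Circle.norm_coe]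
      rw [hψ1, mul_one, norm_mul, norm_pow, norm_prod]
      exact le_of_eq (by simp only [Complex.norm_two, Complex.norm_real, Real.norm_eq_abs])
    have hterm : ∀ l ∈ Finset.univ.erase (0:ZMod p),
        ∏ j, |Real.cos (2 * Real.pi * ((l * b j).val:ℝ)/(p:ℝ))| ≤ 1/(p:ℝ)^4 := by
      intro l hl
      have hl0 : l ≠ 0 := (Finset.mem_erase.1 hl).1
      have h2 : (2 : ZMod p) ≠ 0 := by
        intro h
        have h' : ((2:ℕ) : ZMod p) = 0 := by exact_mod_cast h
        have := (ZMod.natCast_eq_zero_iff 2 p).mp h'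
        have := Nat.le_of_dvd (by norm_num) this
        omega
      have h2l : (2:ZMod p) * l ≠ 0 := mul_ne_zero h2 hl0
      have hcon' := hcon ((2:ZMod p) * l) h2l
      have hj : ∀ j ∈ (Finset.univ : Finset (Fin m)),
          |Real.cos (2 * Real.pi * ((l * b j).val:ℝ)/(p:ℝ))|
            ≤ Real.exp (-(2 * distRZ (((((2:ZMod p)*l) * b j).val : ℝ)/(p:ℝ)) ^ 2)) := by
        intro j _
        have harg : 2 * Real.pi * ((l * b j).val:ℝ)/(p:ℝ)
            = Real.pi * (2 * ((l * b j).val:ℝ)/(p:ℝ)) := by ring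
        have hw : (((2:ZMod p)*l) * b j).val = (2 * (l * b j).val) % p := by
          have h2' : ((2:ZMod p)*l) * b j = ((2 * (l * b j).val : ℕ) : ZMod p) := by
            push_cast
            rw [ZMod.natCast_val, ZMod.cast_id]
            ring
          rw [h2', ZMod.val_natCast]
        have hmod := Nat.div_add_mod (2 * (l * b j).val) p
        have hre : ((2 * (l*b j).val : ℕ) : ℝ)
            = p * ((2 * (l*b j).val / p : ℕ) : ℝ) + ((2 * (l*b j).val % p : ℕ) : ℝ) := by
          exact_mod_cast hmod.symm
        have hrw : 2 * ((l * b j).val:ℝ)/(p:ℝ)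
            = (((2:ZMod p)*l * b j).val : ℝ)/(p:ℝ) + ((2 * (l * b j).val / p : ℕ) : ℤ) := by
          rw [hw, Int.cast_natCast]
          have h2v : (2:ℝ) * ((l * b j).val:ℝ)
              = p * ((2 * (l*b j).val / p : ℕ) : ℝ) + ((2 * (l*b j).val % p : ℕ) : ℝ) := by
            exact_mod_cast hmod.symm
          have hgoal : (2 * ((l * b j).val:ℝ))
              = ((2 * (l * b j).val % p : ℕ) : ℝ) + ((2 * (l * b j).val / p : ℕ) : ℝ) * p := by
            linarith [h2v]
          rw [div_add' _ _ _ hp0', hgoal]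
        have hdist : distRZ (2 * ((l * b j).val:ℝ)/(p:ℝ))
            = distRZ ((((2:ZMod p)*l * b j).val : ℝ)/(p:ℝ)) := by
          rw [hrw, distRZ_add_int]
        rw [harg]
        calc |Real.cos (Real.pi * (2 * ((l * b j).val:ℝ)/(p:ℝ)))|
            ≤ Real.exp (-(2 * distRZ (2 * ((l * b j).val:ℝ)/(p:ℝ)) ^2)) := abs_cos_pi_le _
          _ = _ := by rw [hdist]
      calc ∏ j, |Real.cos (2 * Real.pi * ((l * b j).val:ℝ)/(p:ℝ))|
          ≤ ∏ j, Real.exp (-(2 * distRZ (((((2:ZMod p)*l) * b j).val : ℝ)/(p:ℝ)) ^ 2)) :=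
            Finset.prod_le_prod (fun j _ => abs_nonneg _) hj
        _ = Real.exp (∑ j, -(2 * distRZ (((((2:ZMod p)*l) * b j).val : ℝ)/(p:ℝ)) ^ 2)) :=
            (Real.exp_sum _ _).symm
        _ ≤ 1/(p:ℝ)^4 := by
            have hs : ∑ j, -(2 * distRZ (((((2:ZMod p)*l) * b j).val : ℝ)/(p:ℝ)) ^ 2)
                = -(2 * ∑ j, distRZ (((((2:ZMod p)*l) * b j).val : ℝ)/(p:ℝ)) ^ 2) := by
              rw [Finset.mul_sum, Finset.sum_neg_distrib]
            rw [hs]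
            have hmono : Real.exp (-(2 * ∑ j, distRZ (((((2:ZMod p)*l) * b j).val : ℝ)/(p:ℝ)) ^ 2))
                ≤ Real.exp (-(2 * (2 * Real.log p))) := by
              apply Real.exp_le_exp.2
              have := hcon'
              linarith
            refine le_trans hmono (le_of_eq ?_)
            rw [show -(2 * (2 * Real.log (p:ℝ))) = -(((4:ℕ):ℝ) * Real.log (p:ℝ)) by push_cast; ring]
            rw [Real.exp_neg, Real.exp_nat_mul, Real.exp_log hp0]
            norm_num
    have hsum2 : ∑ l ∈ Finset.univ.erase (0:ZMod p),
        (2:ℝ)^m * ∏ j, |Real.cos (2 * Real.pi * ((l * b j).val:ℝ)/(p:ℝ))|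
        ≤ ((p:ℝ)-1) * ((2:ℝ)^m * (1/(p:ℝ)^4)) := by
      refine le_trans (Finset.sum_le_sum fun l hl =>
        mul_le_mul_of_nonneg_left (hterm l hl) (by positivity)) ?_
      rw [Finset.sum_const, nsmul_eq_mul, Finset.card_erase_of_mem (Finset.mem_univ _),
        Finset.card_univ, ZMod.card]
      rw [Nat.cast_sub hp.one_le]
      simp
    rw [hprob]
    have h2m : (0:ℝ) < 2^m := by positivity
    have heq : C / 2^m - 1/(p:ℝ) = ((p:ℝ)*C - 2^m) / ((p:ℝ) * 2^m) := by
      field_simp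
    rw [heq, abs_div, abs_of_pos (by positivity : (0:ℝ) < (p:ℝ)*2^m)]
    calc |(p:ℝ)*C - 2^m| / ((p:ℝ)*2^m)
        ≤ (((p:ℝ)-1) * ((2:ℝ)^m * (1/(p:ℝ)^4))) / ((p:ℝ)*2^m) := by
          gcongr
          exact le_trans habs1 hsum2
      _ = ((p:ℝ)-1)/(p:ℝ)^5 := by
          field_simp
  have hdisc : disc p b ≤ ((p:ℝ)-1)/(p:ℝ)^5 := by
    unfold disc
    exact ciSup_le hkey
  have hlt : (1:ℝ)/(p:ℝ)^2 < ((p:ℝ)-1)/(p:ℝ)^5 := lt_of_lt_of_le hb hdisc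
  rw [div_lt_div_iff₀ (by positivity) (by positivity)] at hlt
  have h3 : ((p:ℝ)-1) * (p:ℝ)^2 < (p:ℝ)^3 := by nlinarith [pow_pos hp0 2]
  have h4 : ((p:ℝ))^3 ≤ (p:ℝ)^5 := pow_le_pow_right₀ (by linarith) (by norm_num)
  linarith
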